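/- The two-qudit isotropic state σ = p φ⁺ + (1−p) 𝟙/d² is separable for 0 ≤ p ≤ 1/(1+d). (Equivalently: for p in this range, σ admits a decomposition as a convex combination of product states.) -/

import Mathlib

open Matrix BigOperators ComplexOrder Kronecker

noncomputable section

def outer {n : Type*} (v : n → ℂ) : Matrix n n ℂ := fun i j => v i * star (v j)

def IsDensity {n : Type*} [Fintype n] [DecidableEq n] (ρ : Matrix n n ℂ) : Prop :=
  ρ.PosSemidef ∧ ρ.trace = 1

def maxEntVec (d : ℕ) : Fin d × Fin d → ℂ :=
  fun x => if x.1 = x.2 then ((1 / Real.sqrt d : ℝ) : ℂ) else 0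

def isoState (d : ℕ) (p : ℝ) : Matrix (Fin d × Fin d) (Fin d × Fin d) ℂ :=
  p • outer (maxEntVec d) + ((1 - p) / (d ^ 2 : ℝ)) • (1 : Matrix (Fin d × Fin d) (Fin d × Fin d) ℂ)

/-- Bipartite separability on `ℂ^d ⊗ ℂ^d`. -/
def SepDD {d : ℕ} (τ : Matrix (Fin d × Fin d) (Fin d × Fin d) ℂ) : Prop :=
  ∃ (k : ℕ) (t : Fin k → ℝ) (ρ1 ρ2 : Fin k → Matrix (Fin d) (Fin d) ℂ),
    (∀ b, 0 ≤ t b) ∧ (∑ b, t b = 1) ∧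
    (∀ b, IsDensity (ρ1 b) ∧ IsDensity (ρ2 b)) ∧
    τ = ∑ b, t b • (ρ1 b ⊗ₖ ρ2 b)


namespace IsoAux

def g (x : ZMod 4) : ℂ := Complex.I ^ x.val

lemma g_zero : g 0 = 1 := rfl

lemma g_add (x y : ZMod 4) : g (x + y) = g x * g y := by
  unfold g
  rw [ZMod.val_add, ← pow_eq_pow_mod _ Complex.I_pow_four, pow_add]

lemma g_ne_zero (x : ZMod 4) : g x ≠ 0 := pow_ne_zero _ Complex.I_ne_zero

lemma g_conj (x : ZMod 4) : (starRingEnd ℂ) (g x) = g (-x) := by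
  have h1 : (starRingEnd ℂ) (g x) * g x = 1 := by
    rw [← Complex.normSq_eq_conj_mul_self]
    unfold g
    rw [map_pow, Complex.normSq_I, one_pow, Complex.ofReal_one]
  have h2 : g (-x) * g x = 1 := by rw [← g_add, neg_add_cancel, g_zero]
  exact mul_right_cancel₀ (g_ne_zero x) (h1.trans h2.symm)

lemma sum_zmod4 (f : ZMod 4 → ℂ) : ∑ x : ZMod 4, f x = f 0 + f 1 + f 2 + f 3 := by
  have : (Finset.univ : Finset (ZMod 4)) = {0, 1, 2, 3} := by decide
  rw [this, Finset.sum_insert (by decide), Finset.sum_insert (by decide),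
    Finset.sum_insert (by decide), Finset.sum_singleton]
  ring

lemma sum_g (c : ZMod 4) : ∑ x : ZMod 4, g (c * x) = if c = 0 then 4 else 0 := by
  have h0 : g 0 = 1 := rfl
  have h1 : g 1 = Complex.I := by
    unfold g; rw [show ZMod.val (1 : ZMod 4) = 1 from rfl, pow_one]
  have h2 : g 2 = -1 := by
    unfold g; rw [show ZMod.val (2 : ZMod 4) = 2 from rfl, Complex.I_sq]
  have h3 : g 3 = -Complex.I := by
    unfold g; rw [show ZMod.val (3 : ZMod 4) = 3 from rfl, pow_succ, Complex.I_sq]; ring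
  have hc : ∀ x : ZMod 4, x = 0 ∨ x = 1 ∨ x = 2 ∨ x = 3 := by decide
  rcases hc c with rfl | rfl | rfl | rfl <;>
    rw [sum_zmod4] <;>
    simp only [mul_zero, mul_one, zero_mul, one_mul,
      show ((2:ZMod 4) * 2 = 0) from rfl, show ((2:ZMod 4) * 3 = 2) from rfl,
      show ((3:ZMod 4) * 2 = 2) from rfl, show ((3:ZMod 4) * 3 = 1) from rfl,
      h0, h1, h2, h3] <;>
    norm_num [show ((1:ZMod 4) = 0) ↔ False from by decide,
      show ((2:ZMod 4) = 0) ↔ False from by decide,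
      show ((3:ZMod 4) = 0) ↔ False from by decide]

lemma g_finsum {ι : Type*} (s : Finset ι) (f : ι → ZMod 4) :
    g (∑ j ∈ s, f j) = ∏ j ∈ s, g (f j) := by
  classical
  induction s using Finset.induction with
  | empty => simp [g_zero]
  | insert _ _ h ih => rw [Finset.sum_insert h, Finset.prod_insert h, g_add, ih]

lemma key (d : ℕ) (c : Fin d → ZMod 4) :
    ∑ m : Fin d → ZMod 4, g (∑ j, c j * m j)
      = if (∀ j, c j = 0) then (4:ℂ)^d else 0 := by
  have h1 : ∀ m : Fin d → ZMod 4, g (∑ j, c j * m j) = ∏ j, g (c j * m j) :=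
    fun m => g_finsum _ _
  simp_rw [h1]
  rw [← Fintype.prod_sum (f := fun (j : Fin d) (x : ZMod 4) => g (c j * x))]
  simp_rw [sum_g]
  by_cases h : ∀ j, c j = 0
  · rw [if_pos h]
    simp [h, Finset.prod_const]
  · rw [if_neg h]
    push_neg at h
    obtain ⟨j, hj⟩ := h
    exact Finset.prod_eq_zero (Finset.mem_univ j) (if_neg hj)



def cvec (d : ℕ) (a b c e : Fin d) : Fin d → ZMod 4 :=
  fun j => (if j = a then 1 else 0) + (if j = e then 1 else 0)
         - (if j = b then 1 else 0) - (if j = c then 1 else 0)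

lemma lin_comb {d : ℕ} (a b c e : Fin d) (m : Fin d → ZMod 4) :
    ∑ j, cvec d a b c e j * m j = m a + m e - m b - m c := by
  unfold cvec
  simp only [add_mul, sub_mul, ite_mul, one_mul, zero_mul]
  rw [Finset.sum_sub_distrib, Finset.sum_sub_distrib, Finset.sum_add_distrib]
  simp

lemma cond_iff {d : ℕ} (a b c e : Fin d) :
    (∀ j, cvec d a b c e j = 0) ↔ ((a = c ∧ b = e) ∨ (a = b ∧ c = e)) := by
  constructor
  · intro h
    by_cases hac : a = c
    · by_cases hbe : b = e
      · exact Or.inl ⟨hac, hbe⟩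
      · exfalso
        have hb := h b
        subst hac
        unfold cvec at hb
        rw [if_neg hbe, if_pos rfl] at hb
        have : (-1 : ZMod 4) = 0 := by rw [← hb]; ring
        exact absurd this (by decide)
    · by_cases hab : a = b
      · by_cases hce : c = e
        · exact Or.inr ⟨hab, hce⟩
        · exfalso
          have hc' := h c
          subst hab
          unfold cvec at hc'
          rw [if_neg hce, if_pos rfl] at hc'
          have : (-1 : ZMod 4) = 0 := by rw [← hc']; ring
          exact absurd this (by decide)
      · exfalso
        have ha := h a
        unfold cvec at ha
        rw [if_pos rfl, if_neg hab, if_neg hac] at ha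
        by_cases hae : a = e
        · rw [if_pos hae] at ha
          have : (2 : ZMod 4) = 0 := by rw [← ha]; ring
          exact absurd this (by decide)
        · rw [if_neg hae] at ha
          have : (1 : ZMod 4) = 0 := by rw [← ha]; ring
          exact absurd this (by decide)
  · rintro (⟨rfl, rfl⟩ | ⟨rfl, rfl⟩) <;> intro j <;> unfold cvec <;> ring

lemma outer_posSemidef {n : Type*} [Fintype n] [DecidableEq n] (v : n → ℂ) :
    (outer v).PosSemidef := by
  have : outer v = (Matrix.replicateRow Unit (star v))ᴴ * (Matrix.replicateRow Unit (star v)) := by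
    ext i j
    simp [outer, Matrix.mul_apply, Matrix.replicateRow_apply, Matrix.conjTranspose_apply]
  rw [this]
  exact Matrix.posSemidef_conjTranspose_mul_self _

lemma outer_trace {n : Type*} [Fintype n] [DecidableEq n] (v : n → ℂ) :
    (outer v).trace = ∑ i, v i * star (v i) := by
  simp [Matrix.trace, Matrix.diag, outer]


lemma g_mul_conj (x : ZMod 4) : g x * (starRingEnd ℂ) (g x) = 1 := by
  rw [g_conj, ← g_add, add_neg_cancel, g_zero]

def phaseVec (d : ℕ) (m : Fin d → ZMod 4) : Fin d → ℂ :=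
  fun a => ((1 / Real.sqrt d : ℝ) : ℂ) * g (m a)

def basisVec (d : ℕ) (a : Fin d) : Fin d → ℂ := fun j => if j = a then 1 else 0

lemma sqrt_inv_mul_self {d : ℕ} (hd : 0 < d) :
    ((1 / Real.sqrt d : ℝ) : ℂ) * ((1 / Real.sqrt d : ℝ) : ℂ) = ((d:ℂ))⁻¹ := by
  rw [← Complex.ofReal_mul, div_mul_div_comm, one_mul,
    Real.mul_self_sqrt (Nat.cast_nonneg d)]
  push_cast
  rw [one_div]

lemma phase_density {d : ℕ} (hd : 0 < d) (m : Fin d → ZMod 4) :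
    IsDensity (outer (phaseVec d m)) := by
  refine ⟨outer_posSemidef _, ?_⟩
  rw [outer_trace]
  have : ∀ i, phaseVec d m i * star (phaseVec d m i) = ((d:ℂ))⁻¹ := by
    intro i
    show phaseVec d m i * (starRingEnd ℂ) (phaseVec d m i) = _
    unfold phaseVec
    rw [_root_.map_mul, Complex.conj_ofReal]
    calc ((1 / Real.sqrt d : ℝ) : ℂ) * g (m i) *
        (((1 / Real.sqrt d : ℝ) : ℂ) * (starRingEnd ℂ) (g (m i)))
        = (((1 / Real.sqrt d : ℝ) : ℂ) * ((1 / Real.sqrt d : ℝ) : ℂ)) *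
          (g (m i) * (starRingEnd ℂ) (g (m i))) := by ring
      _ = ((d:ℂ))⁻¹ := by rw [sqrt_inv_mul_self hd, g_mul_conj, mul_one]
  rw [Finset.sum_congr rfl (fun i _ => this i)]
  rw [Finset.sum_const, Finset.card_univ, Fintype.card_fin, nsmul_eq_mul]
  have hdc : (d : ℂ) ≠ 0 := Nat.cast_ne_zero.mpr hd.ne'
  field_simp

lemma density_outer_star {n : Type*} [Fintype n] [DecidableEq n] {v : n → ℂ}
    (h : IsDensity (outer v)) : IsDensity (outer (star ∘ v)) := by
  refine ⟨outer_posSemidef _, ?_⟩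
  rw [outer_trace]
  have := h.2
  rw [outer_trace] at this
  calc ∑ i, (star ∘ v) i * star ((star ∘ v) i) = ∑ i, v i * star (v i) := by
        apply Finset.sum_congr rfl
        intro i _
        simp [Function.comp, mul_comm]
    _ = 1 := this

lemma basis_density {d : ℕ} (a : Fin d) : IsDensity (outer (basisVec d a)) := by
  refine ⟨outer_posSemidef _, ?_⟩
  rw [outer_trace]
  have : ∀ i, basisVec d a i * star (basisVec d a i) = if i = a then 1 else 0 := by
    intro i
    unfold basisVec
    by_cases h : i = a <;> simp [h]
  rw [Finset.sum_congr rfl (fun i _ => this i)]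
  simp

lemma outer_basis_apply {d : ℕ} (x i j : Fin d) :
    outer (basisVec d x) i j = if i = x ∧ j = x then 1 else 0 := by
  unfold outer basisVec
  by_cases h1 : i = x <;> by_cases h2 : j = x <;> simp [h1, h2]

lemma phase_sum_entry {d : ℕ} (hd : 0 < d) (a b c e : Fin d) :
    ∑ m : Fin d → ZMod 4, (outer (phaseVec d m) ⊗ₖ outer (star ∘ phaseVec d m)) (a,b) (c,e)
      = ((d:ℂ)^2)⁻¹ * (if ((a = c ∧ b = e) ∨ (a = b ∧ c = e)) then (4:ℂ)^d else 0) := by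
  have hterm : ∀ m : Fin d → ZMod 4,
      (outer (phaseVec d m) ⊗ₖ outer (star ∘ phaseVec d m)) (a,b) (c,e)
        = ((d:ℂ)^2)⁻¹ * g (∑ j, cvec d a b c e j * m j) := by
    intro m
    rw [lin_comb]
    show outer (phaseVec d m) a c * outer (star ∘ phaseVec d m) b e = _
    unfold outer
    show phaseVec d m a * (starRingEnd ℂ) (phaseVec d m c) *
      ((starRingEnd ℂ) (phaseVec d m b) * (starRingEnd ℂ) ((starRingEnd ℂ) (phaseVec d m e))) = _
    rw [Complex.conj_conj]
    unfold phaseVec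
    rw [_root_.map_mul, _root_.map_mul, Complex.conj_ofReal, g_conj, g_conj]
    rw [show (m a + m e - m b - m c) = (m a + m e) + (-(m b)) + (-(m c)) by ring,
      g_add, g_add, g_add]
    rw [show ((d:ℂ)^2)⁻¹ = (d:ℂ)⁻¹ * (d:ℂ)⁻¹ by rw [pow_two, mul_inv], ← sqrt_inv_mul_self hd]
    ring
  rw [Finset.sum_congr rfl (fun m _ => hterm m), ← Finset.mul_sum, key]
  congr 1
  simp only [cond_iff]

lemma diag_entry {d : ℕ} (a b c e : Fin d) :
    ∑ x : Fin d, (outer (basisVec d x) ⊗ₖ outer (basisVec d x)) (a,b) (c,e)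
      = if a = b ∧ a = c ∧ a = e then 1 else 0 := by
  have h1 : ∀ x : Fin d, (outer (basisVec d x) ⊗ₖ outer (basisVec d x)) (a,b) (c,e)
      = (if a = x ∧ c = x then (1:ℂ) else 0) * (if b = x ∧ e = x then 1 else 0) := by
    intro x
    show outer (basisVec d x) a c * outer (basisVec d x) b e = _
    rw [outer_basis_apply, outer_basis_apply]
  rw [Finset.sum_congr rfl (fun x _ => h1 x)]
  rw [Finset.sum_eq_single_of_mem a (Finset.mem_univ a)
    (fun x _ hx => by rw [if_neg (fun h => hx (h.1.symm)), zero_mul])]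
  have hiff : (c = a ∧ b = a ∧ e = a) ↔ (a = b ∧ a = c ∧ a = e) := by
    constructor
    · rintro ⟨hc, hb, he⟩
      exact ⟨hb.symm, hc.symm, he.symm⟩
    · rintro ⟨hb, hc, he⟩
      exact ⟨hc.symm, hb.symm, he.symm⟩
  rw [ite_zero_mul_ite_zero]
  norm_num
  exact if_congr hiff rfl rfl

lemma mix_entry {d : ℕ} (a b c e : Fin d) :
    ∑ x : Fin d × Fin d, (outer (basisVec d x.1) ⊗ₖ outer (basisVec d x.2)) (a,b) (c,e)
      = if a = c ∧ b = e then 1 else 0 := by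
  have h1 : ∀ x : Fin d × Fin d,
      (outer (basisVec d x.1) ⊗ₖ outer (basisVec d x.2)) (a,b) (c,e)
      = (if a = x.1 ∧ c = x.1 then (1:ℂ) else 0) * (if b = x.2 ∧ e = x.2 then 1 else 0) := by
    intro x
    show outer (basisVec d x.1) a c * outer (basisVec d x.2) b e = _
    rw [outer_basis_apply, outer_basis_apply]
  rw [Finset.sum_congr rfl (fun x _ => h1 x), Fintype.sum_prod_type]
  have h2 : ∀ x : Fin d, ∑ y : Fin d,
      (if a = (x,y).1 ∧ c = (x,y).1 then (1:ℂ) else 0) * (if b = (x,y).2 ∧ e = (x,y).2 then 1 else 0)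
      = (if a = x ∧ c = x then (1:ℂ) else 0) * ∑ y : Fin d, (if b = y ∧ e = y then (1:ℂ) else 0) :=
    fun x => by
      show (∑ y : Fin d, (if a = x ∧ c = x then (1:ℂ) else 0) * (if b = y ∧ e = y then 1 else 0)) = _
      rw [← Finset.mul_sum]
  rw [Finset.sum_congr rfl (fun x _ => h2 x), ← Finset.sum_mul]
  have hs : ∀ (u w : Fin d), ∑ x : Fin d, (if u = x ∧ w = x then (1:ℂ) else 0)
      = if u = w then 1 else 0 := by
    intro u w
    by_cases h : u = w
    · subst h
      simp
    · rw [if_neg h, Finset.sum_eq_zero]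
      intro x _
      rw [if_neg]
      rintro ⟨rfl, rfl⟩
      exact h rfl
  rw [hs, hs]
  by_cases h1 : a = c <;> by_cases h2 : b = e <;> simp [h1, h2]

end IsoAux

open IsoAux

/-- the two-qudit isotropic state is separable for `0 ≤ p ≤ 1/(1+d)`. -/
theorem isotropic_separable {d : ℕ} (hd : 2 ≤ d)
    (p : ℝ) (hp0 : 0 ≤ p) (hp1 : p ≤ 1 / (1 + d)) :
    SepDD (isoState d p) := by
  classical
  have hd0 : 0 < d := lt_of_lt_of_le (by norm_num) hd
  have hdR : (0:ℝ) < d := by exact_mod_cast hd0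
  have hdR1 : (0:ℝ) < 1 + d := by linarith
  set s : ℝ := p * (1 + d) with hs
  have hs0 : 0 ≤ s := mul_nonneg hp0 hdR1.le
  have hs1 : s ≤ 1 := by
    rw [hs]
    calc p * (1 + d) ≤ (1 / (1 + d)) * (1 + d) := by
          exact mul_le_mul_of_nonneg_right hp1 hdR1.le
      _ = 1 := by field_simp
  let T := ((Fin d → ZMod 4) ⊕ ((Fin d) ⊕ (Fin d × Fin d)))
  let E : Fin (Fintype.card T) ≃ T := (Fintype.equivFin T).symm
  let w : T → ℝ := Sum.elim (fun _ => s * (d / (1 + d)) / 4 ^ d)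
    (Sum.elim (fun _ => s / (d * (1 + d))) (fun _ => (1 - s) / d ^ 2))
  let R1 : T → Matrix (Fin d) (Fin d) ℂ := Sum.elim (fun m => outer (phaseVec d m))
    (Sum.elim (fun x => outer (basisVec d x)) (fun x => outer (basisVec d x.1)))
  let R2 : T → Matrix (Fin d) (Fin d) ℂ := Sum.elim (fun m => outer (star ∘ phaseVec d m))
    (Sum.elim (fun x => outer (basisVec d x)) (fun x => outer (basisVec d x.2)))
  refine ⟨Fintype.card T, fun b => w (E b), fun b => R1 (E b), fun b => R2 (E b), ?_, ?_, ?_, ?_⟩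
  · have hw : ∀ x : T, 0 ≤ w x := by
      rintro (m | x | x)
      · exact div_nonneg (mul_nonneg hs0 (div_nonneg hdR.le hdR1.le)) (by positivity)
      · exact div_nonneg hs0 (by positivity)
      · exact div_nonneg (by linarith) (by positivity)
    intro b
    exact hw (E b)
  · rw [Equiv.sum_comp E w]
    rw [Fintype.sum_sum_type, Fintype.sum_sum_type]
    simp only [w, Sum.elim_inl, Sum.elim_inr]
    rw [Finset.sum_const, Finset.sum_const, Finset.sum_const]
    simp only [Finset.card_univ, Fintype.card_fun, ZMod.card, Fintype.card_fin,
      Fintype.card_prod, nsmul_eq_mul]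
    have h4 : ((4:ℝ))^d ≠ 0 := by positivity
    push_cast
    field_simp
    ring
  · intro b
    have : ∀ x : T, IsDensity (R1 x) ∧ IsDensity (R2 x) := by
      rintro (m | x | x)
      · exact ⟨phase_density hd0 m, density_outer_star (phase_density hd0 m)⟩
      · exact ⟨basis_density x, basis_density x⟩
      · exact ⟨basis_density x.1, basis_density x.2⟩
    exact this (E b)
  · rw [Equiv.sum_comp E (fun x => w x • (R1 x ⊗ₖ R2 x))]
    rw [Fintype.sum_sum_type, Fintype.sum_sum_type]
    simp only [w, R1, R2, Sum.elim_inl, Sum.elim_inr]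
    ext ⟨a, b⟩ ⟨c, e⟩
    simp only [Matrix.add_apply, Matrix.sum_apply, Matrix.smul_apply, isoState]
    rw [← Finset.smul_sum, ← Finset.smul_sum, ← Finset.smul_sum]
    rw [phase_sum_entry hd0, diag_entry, mix_entry]
    have hone : (1 : Matrix (Fin d × Fin d) (Fin d × Fin d) ℂ) (a,b) (c,e)
        = if a = c ∧ b = e then 1 else 0 := by
      rw [Matrix.one_apply]
      simp [Prod.ext_iff]
    have hmax : outer (maxEntVec d) (a,b) (c,e)
        = if a = b ∧ c = e then ((d:ℂ))⁻¹ else 0 := by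
      have hr : ((1 / Real.sqrt d : ℝ) : ℂ) * star ((1 / Real.sqrt d : ℝ) : ℂ) = ((d:ℂ))⁻¹ := by
        rw [RCLike.star_def, Complex.conj_ofReal]
        exact sqrt_inv_mul_self hd0
      have hm1 : maxEntVec d (a,b) = if a = b then ((1 / Real.sqrt d : ℝ) : ℂ) else 0 := rfl
      have hm2 : maxEntVec d (c,e) = if c = e then ((1 / Real.sqrt d : ℝ) : ℂ) else 0 := rfl
      show maxEntVec d (a,b) * star (maxEntVec d (c,e)) = _
      rw [hm1, hm2]
      by_cases h1 : a = b <;> by_cases h2 : c = e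
      · rw [if_pos h1, if_pos h2, if_pos ⟨h1, h2⟩]
        exact hr
      · rw [if_pos h1, if_neg h2, if_neg (fun h => h2 h.2), star_zero, mul_zero]
      · rw [if_neg h1, if_pos h2, if_neg (fun h => h1 h.1), zero_mul]
      · rw [if_neg h1, if_neg h2, if_neg (fun h => h1 h.1), zero_mul]
    rw [hone, hmax]
    have hdc : (d:ℂ) ≠ 0 := Nat.cast_ne_zero.mpr hd0.ne'
    have hdc1 : (1:ℂ) + d ≠ 0 := by
      intro h
      have : (1:ℝ) + d = 0 := by exact_mod_cast h
      linarith
    have h4c : ((4:ℂ))^d ≠ 0 := pow_ne_zero _ (by norm_num)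
    simp only [Complex.real_smul, hs]
    push_cast
    by_cases hP : a = c ∧ b = e <;> by_cases hQ : a = b ∧ c = e
    · rw [if_pos hQ, if_pos hP, if_pos (Or.inl hP), if_pos ⟨hQ.1, hP.1, hQ.1.trans hP.2⟩]
      field_simp
      ring
    · rw [if_neg hQ, if_pos hP, if_pos (Or.inl hP),
        if_neg (fun h : a = b ∧ a = c ∧ a = e => hQ ⟨h.1, h.2.1.symm.trans h.2.2⟩)]
      field_simp
      ring
    · rw [if_pos hQ, if_neg hP, if_pos (Or.inr hQ),
        if_neg (fun h : a = b ∧ a = c ∧ a = e => hP ⟨h.2.1, h.1.symm.trans h.2.2⟩)]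
      field_simp
      ring
    · rw [if_neg hQ, if_neg hP, if_neg (fun h => h.elim hP hQ),
        if_neg (fun h : a = b ∧ a = c ∧ a = e => hP ⟨h.2.1, h.1.symm.trans h.2.2⟩)]
      simp
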